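/- arXiv:1503.05838 — 4 statements merged into one kernel-verified Lean document; each statement's English description precedes it below -/
import Mathlib

section
/- There exists a constant κ > 0 such that for every ℓ ∈ ℕ and every function f: {1,...,ℓ} → ℝ with ∑_{x=1}^{ℓ} f(x) = 0, one has ∑_{x=1}^{ℓ} f(x)² ≤ κ ℓ^α ∑_{x,y ∈ {1,...,ℓ}} p(y-x) (f(y) - f(x))², where p(z) = c(z)/|z|^(1+α) with c(z) = c⁺ for z > 0, c(z) = c⁻ for z < 0, c(0) = 0. -/
open scoped BigOperators

theorem stmt_1 (α cp cm : ℝ) (hα0 : 0 < α) (hα2 : α < 2)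
    (hcp : 0 ≤ cp) (hcm : 0 ≤ cm) (hc : 0 < cp + cm)
    (p : ℤ → ℝ)
    (hp : ∀ z : ℤ, p z =
      if 0 < z then cp / |(z : ℝ)| ^ (1 + α)
      else if z < 0 then cm / |(z : ℝ)| ^ (1 + α)
      else 0) :
    ∃ κ : ℝ, 0 < κ ∧ ∀ (ℓ : ℕ) (f : ℤ → ℝ),
      (∑ x ∈ Finset.Icc (1 : ℤ) ℓ, f x) = 0 →
      (∑ x ∈ Finset.Icc (1 : ℤ) ℓ, f x ^ 2) ≤
        κ * (ℓ : ℝ) ^ α *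
          ∑ x ∈ Finset.Icc (1 : ℤ) ℓ, ∑ y ∈ Finset.Icc (1 : ℤ) ℓ,
            p (y - x) * (f y - f x) ^ 2 := by
  refine ⟨1 / (cp + cm), by positivity, ?_⟩
  intro ℓ f hf
  rcases Nat.eq_zero_or_pos ℓ with h0 | hℓ
  · subst h0; simp
  set S := Finset.Icc (1 : ℤ) (ℓ : ℤ) with hS
  have hcard : S.card = ℓ := by
    simp [hS, Int.card_Icc]
  have hℓpos : (0 : ℝ) < (ℓ : ℝ) := by exact_mod_cast hℓ
  have hℓα : (0 : ℝ) < (ℓ : ℝ) ^ α := Real.rpow_pos_of_pos hℓpos α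
  have hℓ1α : (0 : ℝ) < (ℓ : ℝ) ^ (1 + α) := Real.rpow_pos_of_pos hℓpos _
  set Q := ∑ x ∈ S, f x ^ 2 with hQ
  set D := ∑ x ∈ S, ∑ y ∈ S, p (y - x) * (f y - f x) ^ 2 with hD
  set c := cp + cm with hcdef
  -- identity: ∑∑ (f y - f x)^2 = 2 ℓ Q
  have hT : (∑ x ∈ S, ∑ y ∈ S, (f y - f x) ^ 2) = 2 * (ℓ : ℝ) * Q := by
    have h1 : ∀ x ∈ S, (∑ y ∈ S, (f y - f x) ^ 2)
        = Q + (ℓ : ℝ) * f x ^ 2 - 2 * f x * (∑ y ∈ S, f y) := by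
      intro x _
      have : ∀ y ∈ S, (f y - f x) ^ 2 = f y ^ 2 + f x ^ 2 - 2 * f x * f y := by
        intro y _; ring
      rw [Finset.sum_congr rfl this, Finset.sum_sub_distrib, Finset.sum_add_distrib,
        Finset.sum_const, nsmul_eq_mul, hcard, Finset.mul_sum, hQ]
    rw [Finset.sum_congr rfl h1]
    rw [Finset.sum_sub_distrib, Finset.sum_add_distrib, Finset.sum_const, nsmul_eq_mul, hcard]
    have hf' : (∑ x ∈ S, f x) = 0 := hf
    rw [← Finset.mul_sum]
    have : (∑ x ∈ S, 2 * f x * (∑ y ∈ S, f y)) = 0 := by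
      simp [hf', mul_comm]
    rw [this]
    ring
  -- symmetrization
  have hsym : D = ∑ x ∈ S, ∑ y ∈ S, p (x - y) * (f y - f x) ^ 2 := by
    rw [hD, Finset.sum_comm]
    exact Finset.sum_congr rfl fun x _ => Finset.sum_congr rfl fun y _ => by ring
  have hpp : ∀ x ∈ S, ∀ y ∈ S,
      c / (ℓ : ℝ) ^ (1 + α) * (f y - f x) ^ 2
        ≤ (p (y - x) + p (x - y)) * (f y - f x) ^ 2 := by
    intro x hx y hy
    rcases eq_or_ne y x with rfl | hne
    · simp
    have hz : y - x ≠ 0 := sub_ne_zero.2 hne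
    have habs : (1 : ℝ) ≤ |((y - x : ℤ) : ℝ)| := by
      have : (1 : ℤ) ≤ |y - x| := Int.one_le_abs hz
      calc (1:ℝ) ≤ ((|y - x| : ℤ) : ℝ) := by exact_mod_cast this
        _ = |((y - x : ℤ) : ℝ)| := by push_cast; rfl
    have habs2 : |((y - x : ℤ) : ℝ)| ≤ (ℓ : ℝ) := by
      simp only [hS, Finset.mem_Icc] at hx hy
      have : |y - x| ≤ (ℓ : ℤ) := abs_le.2 (by omega)
      calc |((y - x : ℤ) : ℝ)| = ((|y - x| : ℤ) : ℝ) := by push_cast; rfl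
        _ ≤ (ℓ : ℝ) := by exact_mod_cast this
    have habspos : (0 : ℝ) < |((y - x : ℤ) : ℝ)| := lt_of_lt_of_le one_pos habs
    -- p (y-x) + p (x-y) = c / |y-x|^(1+α)
    have hsum : p (y - x) + p (x - y) = c / |((y - x : ℤ) : ℝ)| ^ (1 + α) := by
      have hxy : x - y = -(y - x) := by ring
      have habsneg : |((x - y : ℤ) : ℝ)| = |((y - x : ℤ) : ℝ)| := by
        rw [hxy]; push_cast; rw [abs_neg]
      rcases lt_trichotomy (y - x) 0 with h | h | h
      · rw [hp (y - x), hp (x - y), habsneg]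
        rw [if_neg (by omega : ¬ (0:ℤ) < y - x), if_pos h,
          if_pos (by omega : (0:ℤ) < x - y)]
        rw [← add_div, hcdef]
        ring
      · exact absurd h hz
      · rw [hp (y - x), hp (x - y), habsneg]
        rw [if_pos h, if_neg (by omega : ¬ (0:ℤ) < x - y),
          if_pos (by omega : x - y < 0)]
        rw [← add_div, hcdef]
    rw [hsum]
    apply mul_le_mul_of_nonneg_right _ (sq_nonneg _)
    apply div_le_div_of_nonneg_left hc.le (Real.rpow_pos_of_pos habspos _)
    exact Real.rpow_le_rpow habspos.le habs2 (by linarith)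
  -- key inequality
  have key : c / (ℓ : ℝ) ^ (1 + α) * (2 * (ℓ : ℝ) * Q) ≤ 2 * D := by
    have h2D : 2 * D = ∑ x ∈ S, ∑ y ∈ S, (p (y - x) + p (x - y)) * (f y - f x) ^ 2 := by
      rw [two_mul]
      nth_rewrite 2 [hsym]
      rw [hD, ← Finset.sum_add_distrib]
      refine Finset.sum_congr rfl fun x _ => ?_
      rw [← Finset.sum_add_distrib]
      exact Finset.sum_congr rfl fun y _ => by ring
    rw [h2D, ← hT, Finset.mul_sum]
    refine Finset.sum_le_sum fun x hx => ?_
    rw [Finset.mul_sum]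
    exact Finset.sum_le_sum fun y hy => hpp x hx y hy
  have hsplit : (ℓ : ℝ) ^ (1 + α) = (ℓ : ℝ) * (ℓ : ℝ) ^ α := by
    rw [Real.rpow_add hℓpos, Real.rpow_one]
  have key2 : c * Q ≤ (ℓ : ℝ) ^ α * D := by
    rw [div_mul_eq_mul_div, div_le_iff₀ hℓ1α, hsplit] at key
    nlinarith [key, hℓpos, mul_pos hℓpos hℓα]
  rw [one_div, mul_assoc, inv_mul_eq_div, le_div_iff₀ hc]
  linarith [key2]
end

section
/- Let ρ ∈ (0,1), ℓ ≥ 2, and η(0),...,η(ℓ-1) i.i.d. Bernoulli(ρ), with η̄(i) = η(i) - ρ and η^ℓ = (1/ℓ)∑_{i=0}^{ℓ-1} η(i). Define ψ^ℓ = (ℓ/(ℓ-1))((η^ℓ - ρ)² - ρ(1-ρ)/ℓ) + ((2ρ-1)/(ℓ-1))(η^ℓ - ρ). Then there is a constant c(ρ) depending only on ρ such that E[(ψ^ℓ)²] ≤ c(ρ)/ℓ². -/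
open MeasureTheory ProbabilityTheory
open scoped BigOperators
set_option maxHeartbeats 1000000

lemma integrable_of_ae_bound {Ω : Type} [MeasurableSpace Ω] {μ : Measure Ω}
    [IsFiniteMeasure μ] {f : Ω → ℝ} (hm : AEStronglyMeasurable f μ) {C : ℝ}
    (h : ∀ᵐ ω ∂μ, |f ω| ≤ C) : Integrable f μ :=
  (integrable_const C).mono' hm (by simpa [Real.norm_eq_abs] using h)

lemma moments_aux {Ω : Type} [MeasurableSpace Ω] (μ : Measure Ω) [IsProbabilityMeasure μ]
    {n : ℕ} (X : Fin n → Ω → ℝ) (hmeas : ∀ i, Measurable (X i))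
    (hindep : iIndepFun X μ)
    (hbound : ∀ᵐ ω ∂μ, ∀ i, |X i ω| ≤ 1)
    (hmean : ∀ i, ∫ ω, X i ω ∂μ = 0) (s : Finset (Fin n)) :
    (∫ ω, (∑ i ∈ s, X i ω) ∂μ = 0) ∧
    (∫ ω, (∑ i ∈ s, X i ω) ^ 2 ∂μ ≤ (s.card : ℝ)) ∧
    (∫ ω, (∑ i ∈ s, X i ω) ^ 4 ∂μ ≤ 3 * (s.card : ℝ) ^ 2) := by
  -- basic boundedness facts
  have hSb : ∀ (t : Finset (Fin n)) (k : ℕ), ∀ᵐ ω ∂μ,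
      |(∑ i ∈ t, X i ω) ^ k| ≤ ((t.card : ℝ)) ^ k := by
    intro t k
    filter_upwards [hbound] with ω h
    have h1 : |∑ i ∈ t, X i ω| ≤ (t.card : ℝ) := by
      calc |∑ i ∈ t, X i ω| ≤ ∑ i ∈ t, |X i ω| := Finset.abs_sum_le_sum_abs _ _
        _ ≤ ∑ _i ∈ t, (1 : ℝ) := Finset.sum_le_sum (fun i _ => h i)
        _ = (t.card : ℝ) := by simp
    calc |(∑ i ∈ t, X i ω) ^ k| = |∑ i ∈ t, X i ω| ^ k := by rw [abs_pow]
      _ ≤ ((t.card : ℝ)) ^ k := pow_le_pow_left₀ (abs_nonneg _) h1 k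
  have hSm : ∀ (t : Finset (Fin n)) (k : ℕ),
      Measurable fun ω => (∑ i ∈ t, X i ω) ^ k := fun t k =>
    (Finset.measurable_sum t (fun i _ => hmeas i)).pow_const k
  have hSint : ∀ (t : Finset (Fin n)) (k : ℕ),
      Integrable (fun ω => (∑ i ∈ t, X i ω) ^ k) μ := fun t k =>
    integrable_of_ae_bound (hSm t k).aestronglyMeasurable (hSb t k)
  have hXint : ∀ (i : Fin n) (k : ℕ), Integrable (fun ω => (X i ω) ^ k) μ := by
    intro i k
    refine integrable_of_ae_bound ((hmeas i).pow_const k).aestronglyMeasurable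
      (C := 1) ?_
    filter_upwards [hbound] with ω h
    rw [abs_pow]
    exact pow_le_one₀ (abs_nonneg _) (h i)
  have hXsq : ∀ (i : Fin n) (k : ℕ), ∫ ω, (X i ω) ^ (2 * k) ∂μ ≤ 1 := by
    intro i k
    calc ∫ ω, (X i ω) ^ (2 * k) ∂μ ≤ ∫ _ω, (1 : ℝ) ∂μ := by
          refine integral_mono_ae (hXint i _) (integrable_const 1) ?_
          filter_upwards [hbound] with ω h
          calc (X i ω) ^ (2 * k) ≤ |(X i ω) ^ (2 * k)| := le_abs_self _
            _ ≤ 1 := by rw [abs_pow]; exact pow_le_one₀ (abs_nonneg _) (h i)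
      _ = 1 := by simp
  induction s using Finset.cons_induction with
  | empty => simp
  | cons i s hi IH =>
    obtain ⟨IH1, IH2, IH4⟩ := IH
    set Y : Ω → ℝ := fun ω => ∑ j ∈ s, X j ω with hY
    have hsum : ∀ ω, (∑ j ∈ Finset.cons i s hi, X j ω) = X i ω + Y ω := by
      intro ω; rw [Finset.sum_cons]
    have hind : IndepFun Y (X i) μ := by
      have := hindep.indepFun_finsetSum_of_notMem hmeas hi
      have he : (∑ j ∈ s, X j) = Y := by funext ω; simp [hY, Finset.sum_apply]
      rwa [he] at this
    have hmulint : ∀ k m : ℕ,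
        ∫ ω, (Y ω) ^ k * (X i ω) ^ m ∂μ =
          (∫ ω, (Y ω) ^ k ∂μ) * (∫ ω, (X i ω) ^ m ∂μ) := by
      intro k m
      have h2 : IndepFun (fun ω => (Y ω) ^ k) (fun ω => (X i ω) ^ m) μ :=
        hind.comp (measurable_id.pow_const k) (measurable_id.pow_const m)
      exact h2.integral_mul_eq_mul_integral (hSint s k).aestronglyMeasurable (hXint i m).aestronglyMeasurable
    have hYk : ∀ k, Integrable (fun ω => (Y ω) ^ k) μ := hSint s
    have hprodint : ∀ k m : ℕ,
        Integrable (fun ω => (Y ω) ^ k * (X i ω) ^ m) μ := by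
      intro k m
      refine integrable_of_ae_bound
        (((hSm s k).mul ((hmeas i).pow_const m)).aestronglyMeasurable)
        (C := ((s.card : ℝ)) ^ k * 1) ?_
      filter_upwards [hSb s k, hbound] with ω h1 h2
      rw [abs_mul]
      exact mul_le_mul h1 (by rw [abs_pow]; exact pow_le_one₀ (abs_nonneg _) (h2 i))
        (abs_nonneg _) (pow_nonneg (Nat.cast_nonneg _) _)
    have hY1 : ∫ ω, Y ω ∂μ = 0 := IH1
    have hX1 : ∫ ω, X i ω ∂μ = 0 := hmean i
    have hY2nn : 0 ≤ ∫ ω, (Y ω) ^ 2 ∂μ :=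
      integral_nonneg (fun ω => sq_nonneg _)
    have hX2nn : 0 ≤ ∫ ω, (X i ω) ^ 2 ∂μ :=
      integral_nonneg (fun ω => sq_nonneg _)
    have card_cons : ((Finset.cons i s hi).card : ℝ) = (s.card : ℝ) + 1 := by
      rw [Finset.card_cons]; push_cast; ring
    have hXi : Integrable (X i) μ :=
      (hXint i 1).congr (Filter.Eventually.of_forall fun ω => pow_one _)
    have hYint : Integrable Y μ :=
      (hYk 1).congr (Filter.Eventually.of_forall fun ω => pow_one _)
    have hmul11 : ∫ ω, Y ω * X i ω ∂μ = 0 := by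
      have h := hmulint 1 1
      simp only [pow_one] at h
      rw [h, hX1, mul_zero]
    have hmul13 : ∫ ω, Y ω * (X i ω) ^ 3 ∂μ = 0 := by
      have h := hmulint 1 3
      simp only [pow_one] at h
      rw [h, hY1, zero_mul]
    have hmul31 : ∫ ω, (Y ω) ^ 3 * X i ω ∂μ = 0 := by
      have h := hmulint 3 1
      simp only [pow_one] at h
      rw [h, hX1, mul_zero]
    have hmul22 : ∫ ω, (Y ω) ^ 2 * (X i ω) ^ 2 ∂μ =
        (∫ ω, (Y ω) ^ 2 ∂μ) * (∫ ω, (X i ω) ^ 2 ∂μ) := hmulint 2 2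
    have hint13 : Integrable (fun ω => Y ω * (X i ω) ^ 3) μ :=
      (hprodint 1 3).congr (Filter.Eventually.of_forall fun ω => by simp)
    have hint11 : Integrable (fun ω => Y ω * X i ω) μ :=
      (hprodint 1 1).congr (Filter.Eventually.of_forall fun ω => by simp)
    have hint31 : Integrable (fun ω => (Y ω) ^ 3 * X i ω) μ :=
      (hprodint 3 1).congr (Filter.Eventually.of_forall fun ω => by simp)
    have hint22 : Integrable (fun ω => (Y ω) ^ 2 * (X i ω) ^ 2) μ := hprodint 2 2
    have hX2 : ∫ ω, (X i ω) ^ 2 ∂μ ≤ 1 := by simpa using hXsq i 1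
    have hX4 : ∫ ω, (X i ω) ^ 4 ∂μ ≤ 1 := by simpa using hXsq i 2
    refine ⟨?_, ?_, ?_⟩
    · simp_rw [hsum]
      rw [integral_add hXi hYint, hX1, hY1, add_zero]
    · have expand : ∀ ω : Ω, (X i ω + Y ω) ^ 2 =
          (X i ω) ^ 2 + (2 * (Y ω * X i ω) + (Y ω) ^ 2) := fun ω => by ring
      simp_rw [hsum, expand]
      have e1 : ∫ ω, ((X i ω) ^ 2 + (2 * (Y ω * X i ω) + (Y ω) ^ 2)) ∂μ
          = (∫ ω, (X i ω) ^ 2 ∂μ) + ∫ ω, (2 * (Y ω * X i ω) + (Y ω) ^ 2) ∂μ :=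
        integral_add (hXint i 2) ((hint11.const_mul 2).add (hYk 2))
      have e2 : ∫ ω, (2 * (Y ω * X i ω) + (Y ω) ^ 2) ∂μ
          = (∫ ω, 2 * (Y ω * X i ω) ∂μ) + ∫ ω, (Y ω) ^ 2 ∂μ :=
        integral_add (hint11.const_mul 2) (hYk 2)
      have e3 : ∫ ω, 2 * (Y ω * X i ω) ∂μ = 2 * ∫ ω, Y ω * X i ω ∂μ :=
        integral_const_mul 2 _
      rw [e1, e2, e3, hmul11, mul_zero, zero_add, card_cons]
      linarith
    · have expand : ∀ ω : Ω, (X i ω + Y ω) ^ 4 =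
          (X i ω) ^ 4 + (4 * (Y ω * (X i ω) ^ 3) + (6 * ((Y ω) ^ 2 * (X i ω) ^ 2)
            + (4 * ((Y ω) ^ 3 * X i ω) + (Y ω) ^ 4))) := fun ω => by ring
      simp_rw [hsum, expand]
      have e1 : ∫ ω, ((X i ω) ^ 4 + (4 * (Y ω * (X i ω) ^ 3) + (6 * ((Y ω) ^ 2 * (X i ω) ^ 2)
            + (4 * ((Y ω) ^ 3 * X i ω) + (Y ω) ^ 4)))) ∂μ
          = (∫ ω, (X i ω) ^ 4 ∂μ) + ∫ ω, (4 * (Y ω * (X i ω) ^ 3)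
            + (6 * ((Y ω) ^ 2 * (X i ω) ^ 2) + (4 * ((Y ω) ^ 3 * X i ω) + (Y ω) ^ 4))) ∂μ :=
        integral_add (hXint i 4) ((hint13.const_mul 4).add
          ((hint22.const_mul 6).add ((hint31.const_mul 4).add (hYk 4))))
      have e2 : ∫ ω, (4 * (Y ω * (X i ω) ^ 3)
            + (6 * ((Y ω) ^ 2 * (X i ω) ^ 2) + (4 * ((Y ω) ^ 3 * X i ω) + (Y ω) ^ 4))) ∂μ
          = (∫ ω, 4 * (Y ω * (X i ω) ^ 3) ∂μ)
            + ∫ ω, (6 * ((Y ω) ^ 2 * (X i ω) ^ 2) + (4 * ((Y ω) ^ 3 * X i ω) + (Y ω) ^ 4)) ∂μ :=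
        integral_add (hint13.const_mul 4)
          ((hint22.const_mul 6).add ((hint31.const_mul 4).add (hYk 4)))
      have e3 : ∫ ω, (6 * ((Y ω) ^ 2 * (X i ω) ^ 2) + (4 * ((Y ω) ^ 3 * X i ω) + (Y ω) ^ 4)) ∂μ
          = (∫ ω, 6 * ((Y ω) ^ 2 * (X i ω) ^ 2) ∂μ)
            + ∫ ω, (4 * ((Y ω) ^ 3 * X i ω) + (Y ω) ^ 4) ∂μ :=
        integral_add (hint22.const_mul 6) ((hint31.const_mul 4).add (hYk 4))
      have e4 : ∫ ω, (4 * ((Y ω) ^ 3 * X i ω) + (Y ω) ^ 4) ∂μ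
          = (∫ ω, 4 * ((Y ω) ^ 3 * X i ω) ∂μ) + ∫ ω, (Y ω) ^ 4 ∂μ :=
        integral_add (hint31.const_mul 4) (hYk 4)
      have c1 : ∫ ω, 4 * (Y ω * (X i ω) ^ 3) ∂μ = 0 := by
        rw [integral_const_mul, hmul13, mul_zero]
      have c2 : ∫ ω, 4 * ((Y ω) ^ 3 * X i ω) ∂μ = 0 := by
        rw [integral_const_mul, hmul31, mul_zero]
      have c3 : ∫ ω, 6 * ((Y ω) ^ 2 * (X i ω) ^ 2) ∂μ
          = 6 * ((∫ ω, (Y ω) ^ 2 ∂μ) * (∫ ω, (X i ω) ^ 2 ∂μ)) := by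
        rw [integral_const_mul, hmul22]
      rw [e1, e2, e3, e4, c1, c2, c3, card_cons]
      have h22 : (∫ ω, (Y ω) ^ 2 ∂μ) * (∫ ω, (X i ω) ^ 2 ∂μ) ≤ (s.card : ℝ) := by
        calc (∫ ω, (Y ω) ^ 2 ∂μ) * (∫ ω, (X i ω) ^ 2 ∂μ)
            ≤ (∫ ω, (Y ω) ^ 2 ∂μ) * 1 := by
              exact mul_le_mul_of_nonneg_left hX2 hY2nn
          _ ≤ (s.card : ℝ) := by rw [mul_one]; exact IH2
      have hc : (0 : ℝ) ≤ (s.card : ℝ) := Nat.cast_nonneg _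
      nlinarith [IH4]

lemma integrable_dirac_my {g : ℝ → ℝ} (hg : Measurable g) (a : ℝ) :
    Integrable g (Measure.dirac a) :=
  ⟨hg.aestronglyMeasurable, by
    show (∫⁻ x, ‖g x‖ₑ ∂(Measure.dirac a)) < ⊤
    rw [lintegral_dirac]
    exact enorm_lt_top⟩


theorem stmt_9 (ρ : ℝ) (hρ0 : 0 < ρ) (hρ1 : ρ < 1) :
    ∃ c : ℝ, 0 < c ∧
      ∀ (ℓ : ℕ), 2 ≤ ℓ →
        ∀ (Ω : Type) (_ : MeasurableSpace Ω) (μ : Measure Ω),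
          IsProbabilityMeasure μ →
          ∀ (η : Fin ℓ → Ω → ℝ),
            (∀ i, Measurable (η i)) →
            (∀ i, Measure.map (η i) μ =
              ENNReal.ofReal ρ • Measure.dirac (1 : ℝ) +
                ENNReal.ofReal (1 - ρ) • Measure.dirac (0 : ℝ)) →
            iIndepFun η μ →
            (∫ ω, ((ℓ / (ℓ - 1) : ℝ) *
                (((∑ i, η i ω) / ℓ - ρ) ^ 2 - ρ * (1 - ρ) / ℓ) +
              ((2 * ρ - 1) / (ℓ - 1)) * ((∑ i, η i ω) / ℓ - ρ)) ^ 2 ∂μ)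
              ≤ c / (ℓ : ℝ) ^ 2 := by
  refine ⟨100, by norm_num, ?_⟩
  intro ℓ hℓ Ω mΩ μ hμ η hmeas hlaw hindep
  have hρ1' : (0:ℝ) < 1 - ρ := by linarith
  -- integrals against the law
  have hlawint : ∀ (i : Fin ℓ) (g : ℝ → ℝ), Measurable g →
      ∫ ω, g (η i ω) ∂μ = ρ * g 1 + (1 - ρ) * g 0 := by
    intro i g hg
    have h1 : ∫ ω, g (η i ω) ∂μ = ∫ x, g x ∂(Measure.map (η i) μ) :=
      (integral_map (hmeas i).aemeasurable hg.aestronglyMeasurable).symm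
    rw [h1, hlaw i, integral_add_measure
        ((integrable_dirac_my hg 1).smul_measure ENNReal.ofReal_ne_top)
        ((integrable_dirac_my hg 0).smul_measure ENNReal.ofReal_ne_top),
      integral_smul_measure, integral_smul_measure, integral_dirac, integral_dirac,
      ENNReal.toReal_ofReal hρ0.le, ENNReal.toReal_ofReal hρ1'.le]
    simp [smul_eq_mul]
  -- a.e. values in {0,1}
  have hae : ∀ᵐ ω ∂μ, ∀ i, η i ω ∈ ({0, 1} : Set ℝ) := by
    rw [ae_all_iff]
    intro i
    have hset : MeasurableSet ({0, 1} : Set ℝ) :=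
      (measurableSet_singleton (1:ℝ)).insert 0
    have : μ (η i ⁻¹' ({0,1} : Set ℝ)ᶜ) = 0 := by
      have hm := Measure.map_apply (μ := μ) (hmeas i) hset.compl
      rw [hlaw i] at hm
      rw [← hm]
      simp [Measure.dirac_apply']
    exact this
  -- centered variables
  set X : Fin ℓ → Ω → ℝ := fun i ω => η i ω - ρ with hXdef
  have hXmeas : ∀ i, Measurable (X i) := fun i => (hmeas i).sub measurable_const
  have hXindep : iIndepFun X μ :=
    hindep.comp (fun _ => fun x => x - ρ) (fun _ => measurable_id.sub_const ρ)
  have hXbound : ∀ᵐ ω ∂μ, ∀ i, |X i ω| ≤ 1 := by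
    filter_upwards [hae] with ω h i
    have hXi : X i ω = η i ω - ρ := rfl
    rw [hXi]
    rcases h i with h0 | h1
    · rw [h0, abs_le]; constructor <;> linarith
    · rw [Set.mem_singleton_iff] at h1
      rw [h1, abs_le]; constructor <;> linarith
  have hXmean : ∀ i, ∫ ω, X i ω ∂μ = 0 := by
    intro i
    have := hlawint i (fun x => x - ρ) (measurable_id.sub_const ρ)
    rw [hXdef]
    simp only []
    rw [this]; ring
  obtain ⟨hm1, hm2, hm4⟩ := moments_aux μ X hXmeas hXindep hXbound hXmean Finset.univ
  clear hm1
  rw [Finset.card_univ, Fintype.card_fin] at hm2 hm4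
  -- notation
  set L : ℝ := (ℓ : ℝ) with hLdef
  have hL2 : (2:ℝ) ≤ L := by rw [hLdef]; exact_mod_cast hℓ
  have hL0 : (0:ℝ) < L := by linarith
  have hL1 : (0:ℝ) < L - 1 := by linarith
  set S : Ω → ℝ := fun ω => ∑ i, X i ω with hSdef
  have hrel : ∀ ω, (∑ i, η i ω) / L - ρ = S ω / L := by
    intro ω
    have hsum : (∑ i, η i ω) = S ω + L * ρ := by
      rw [hSdef]
      simp only [hXdef]
      rw [Finset.sum_sub_distrib]
      simp [hLdef, mul_comm]
    rw [hsum]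
    field_simp
    ring
  set a : ℝ := L / (L - 1) with hadef
  set b : ℝ := (2 * ρ - 1) / (L - 1) with hbdef
  set v : ℝ := ρ * (1 - ρ) with hvdef
  simp only [hrel]
  -- integrability of powers of S
  have hSmeas : Measurable S := Finset.measurable_sum _ (fun i _ => hXmeas i)
  have hSb : ∀ k : ℕ, ∀ᵐ ω ∂μ, |(S ω) ^ k| ≤ L ^ k := by
    intro k
    filter_upwards [hXbound] with ω h
    have h1 : |S ω| ≤ L := by
      rw [hSdef]
      calc |∑ i, X i ω| ≤ ∑ i, |X i ω| := Finset.abs_sum_le_sum_abs _ _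
        _ ≤ ∑ _i : Fin ℓ, (1:ℝ) := Finset.sum_le_sum (fun i _ => h i)
        _ = L := by simp [hLdef]
    rw [abs_pow]
    exact pow_le_pow_left₀ (abs_nonneg _) h1 k
  have hSint : ∀ k : ℕ, Integrable (fun ω => (S ω) ^ k) μ := fun k =>
    integrable_of_ae_bound (hSmeas.pow_const k).aestronglyMeasurable (hSb k)
  -- the dominating function
  set g : Ω → ℝ := fun ω => (4 * a ^ 2 / L ^ 4) * (S ω) ^ 4 +
      ((2 * b ^ 2 / L ^ 2) * (S ω) ^ 2 + 4 * a ^ 2 * v ^ 2 / L ^ 2) with hgdef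
  have hgint : Integrable g μ :=
    ((hSint 4).const_mul _).add (((hSint 2).const_mul _).add (integrable_const _))
  have hpt : ∀ ω, (a * ((S ω / L) ^ 2 - v / L) + b * (S ω / L)) ^ 2 ≤ g ω := by
    intro ω
    have hL0' : L ≠ 0 := ne_of_gt hL0
    set t : ℝ := S ω / L with htdef
    have ht2 : (S ω) ^ 2 / L ^ 2 = t ^ 2 := by rw [htdef, div_pow]
    have ht4 : (S ω) ^ 4 / L ^ 4 = t ^ 4 := by rw [htdef, div_pow]
    have hg' : g ω = 4 * a ^ 2 * t ^ 4 + (2 * b ^ 2 * t ^ 2 + 4 * a ^ 2 * (v / L) ^ 2) := by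
      rw [hgdef]
      simp only []
      rw [div_pow, ← ht2, ← ht4]
      field_simp
    rw [hg']
    set w : ℝ := v / L
    nlinarith [sq_nonneg (a * (t ^ 2 - w) - b * t), sq_nonneg (a * (t ^ 2 + w)), sq_nonneg (b * t)]
  have step1 : (∫ ω, (a * ((S ω / L) ^ 2 - v / L) + b * (S ω / L)) ^ 2 ∂μ) ≤ ∫ ω, g ω ∂μ := by
    refine integral_mono_of_nonneg (Filter.Eventually.of_forall fun ω => sq_nonneg _)
      hgint (Filter.Eventually.of_forall hpt)
  -- compute ∫ g
  have hM4 : ∫ ω, (S ω) ^ 4 ∂μ ≤ 3 * L ^ 2 := hm4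
  have hM2 : ∫ ω, (S ω) ^ 2 ∂μ ≤ L := hm2
  have hM4nn : 0 ≤ ∫ ω, (S ω) ^ 4 ∂μ := integral_nonneg fun ω => by positivity
  have hM2nn : 0 ≤ ∫ ω, (S ω) ^ 2 ∂μ := integral_nonneg fun ω => sq_nonneg _
  have hgeq : ∫ ω, g ω ∂μ = (4 * a ^ 2 / L ^ 4) * (∫ ω, (S ω) ^ 4 ∂μ) +
      ((2 * b ^ 2 / L ^ 2) * (∫ ω, (S ω) ^ 2 ∂μ) + 4 * a ^ 2 * v ^ 2 / L ^ 2) := by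
    have e1 : ∫ ω, ((4 * a ^ 2 / L ^ 4) * (S ω) ^ 4 +
        ((2 * b ^ 2 / L ^ 2) * (S ω) ^ 2 + 4 * a ^ 2 * v ^ 2 / L ^ 2)) ∂μ
        = (∫ ω, (4 * a ^ 2 / L ^ 4) * (S ω) ^ 4 ∂μ) +
          ∫ ω, ((2 * b ^ 2 / L ^ 2) * (S ω) ^ 2 + 4 * a ^ 2 * v ^ 2 / L ^ 2) ∂μ :=
      integral_add ((hSint 4).const_mul _) (((hSint 2).const_mul _).add (integrable_const _))
    have e2 : ∫ ω, ((2 * b ^ 2 / L ^ 2) * (S ω) ^ 2 + 4 * a ^ 2 * v ^ 2 / L ^ 2) ∂μ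
        = (∫ ω, (2 * b ^ 2 / L ^ 2) * (S ω) ^ 2 ∂μ) +
          ∫ ω, (4 * a ^ 2 * v ^ 2 / L ^ 2 : ℝ) ∂μ :=
      integral_add ((hSint 2).const_mul _) (integrable_const _)
    have e3 : ∫ _ω, (4 * a ^ 2 * v ^ 2 / L ^ 2 : ℝ) ∂μ = 4 * a ^ 2 * v ^ 2 / L ^ 2 := by
      simp [integral_const, measure_univ]
    rw [hgdef]
    simp only []
    rw [e1, e2, e3, integral_const_mul, integral_const_mul]
  -- numeric bounds
  have ha0 : 0 < a := div_pos hL0 hL1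
  have ha2 : a ≤ 2 := by
    rw [hadef, div_le_iff₀ hL1]; linarith
  have hasq : a ^ 2 ≤ 4 := by nlinarith
  have hbsq : b ^ 2 ≤ 2 / L := by
    rw [hbdef, div_pow, div_le_div_iff₀ (by positivity) hL0]
    nlinarith [mul_pos hρ0 hρ1']
  have hv0 : 0 ≤ v := by rw [hvdef]; exact (mul_pos hρ0 hρ1').le
  have hv1 : v ≤ 1 := by rw [hvdef]; nlinarith
  have hvsq : v ^ 2 ≤ 1 := by nlinarith
  have h1 : (4 * a ^ 2 / L ^ 4) * (∫ ω, (S ω) ^ 4 ∂μ) ≤ 48 / L ^ 2 := by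
    have : (4 * a ^ 2 / L ^ 4) * (∫ ω, (S ω) ^ 4 ∂μ) ≤ (4 * 4 / L ^ 4) * (3 * L ^ 2) := by
      gcongr
    calc (4 * a ^ 2 / L ^ 4) * (∫ ω, (S ω) ^ 4 ∂μ) ≤ (4 * 4 / L ^ 4) * (3 * L ^ 2) := this
      _ = 48 / L ^ 2 := by field_simp; ring
  have h2 : (2 * b ^ 2 / L ^ 2) * (∫ ω, (S ω) ^ 2 ∂μ) ≤ 4 / L ^ 2 := by
    have : (2 * b ^ 2 / L ^ 2) * (∫ ω, (S ω) ^ 2 ∂μ) ≤ (2 * (2 / L) / L ^ 2) * L := by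
      gcongr
    calc (2 * b ^ 2 / L ^ 2) * (∫ ω, (S ω) ^ 2 ∂μ) ≤ (2 * (2 / L) / L ^ 2) * L := this
      _ = 4 / L ^ 2 := by field_simp; ring
  have h3 : 4 * a ^ 2 * v ^ 2 / L ^ 2 ≤ 16 / L ^ 2 := by
    have h : 4 * a ^ 2 * v ^ 2 ≤ 16 := by nlinarith [sq_nonneg a, sq_nonneg v]
    have hp : (0:ℝ) < L ^ 2 := by positivity
    exact (div_le_div_iff_of_pos_right hp).mpr h
  have hfin : (0:ℝ) < 1 / L ^ 2 := by positivity
  calc (∫ ω, (a * ((S ω / L) ^ 2 - v / L) + b * (S ω / L)) ^ 2 ∂μ)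
      ≤ ∫ ω, g ω ∂μ := step1
    _ = (4 * a ^ 2 / L ^ 4) * (∫ ω, (S ω) ^ 4 ∂μ) +
        ((2 * b ^ 2 / L ^ 2) * (∫ ω, (S ω) ^ 2 ∂μ) + 4 * a ^ 2 * v ^ 2 / L ^ 2) := hgeq
    _ ≤ 48 / L ^ 2 + (4 / L ^ 2 + 16 / L ^ 2) := by linarith
    _ ≤ 100 / L ^ 2 := by
        have e : 48 / L ^ 2 + (4 / L ^ 2 + 16 / L ^ 2) = 68 / L ^ 2 := by ring
        rw [e]
        have hp : (0:ℝ) < L ^ 2 := by positivity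
        exact (div_le_div_iff_of_pos_right hp).mpr (by norm_num)
end

section
/- Let ρ ∈ (0,1), ℓ ≥ 2, η(0),...,η(ℓ-1) i.i.d. Bernoulli(ρ), η^ℓ the empirical mean, and ψ^ℓ as above. Then there is a constant c(ρ) such that E[(ψ^ℓ - (η^ℓ - ρ)² + ρ(1-ρ)/ℓ)²] ≤ c(ρ)/ℓ³. -/
set_option maxHeartbeats 1000000


open MeasureTheory ProbabilityTheory
open scoped BigOperators

theorem stmt_10 (ρ : ℝ) (hρ0 : 0 < ρ) (hρ1 : ρ < 1) :
    ∃ c : ℝ, 0 < c ∧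
      ∀ (ℓ : ℕ), 2 ≤ ℓ →
        ∀ (Ω : Type) (_ : MeasurableSpace Ω) (μ : Measure Ω),
          IsProbabilityMeasure μ →
          ∀ (η : Fin ℓ → Ω → ℝ),
            (∀ i, Measurable (η i)) →
            (∀ i, Measure.map (η i) μ =
              ENNReal.ofReal ρ • Measure.dirac (1 : ℝ) +
                ENNReal.ofReal (1 - ρ) • Measure.dirac (0 : ℝ)) →
            iIndepFun η μ →
            (∫ ω, (((ℓ / (ℓ - 1) : ℝ) *
                (((∑ i, η i ω) / ℓ - ρ) ^ 2 - ρ * (1 - ρ) / ℓ) +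
                ((2 * ρ - 1) / (ℓ - 1)) * ((∑ i, η i ω) / ℓ - ρ))
                - ((∑ i, η i ω) / ℓ - ρ) ^ 2 + ρ * (1 - ρ) / ℓ) ^ 2 ∂μ)
              ≤ c / (ℓ : ℝ) ^ 3 := by
  refine ⟨36, by norm_num, ?_⟩
  intro ℓ hℓ Ω mΩ μ hμ η hm hmap hind
  have hL2 : (2 : ℝ) ≤ (ℓ : ℝ) := by exact_mod_cast hℓ
  have hL0 : (0 : ℝ) < (ℓ : ℝ) := by linarith
  have hL1 : (0 : ℝ) < (ℓ : ℝ) - 1 := by linarith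
  set L : ℝ := (ℓ : ℝ) with hLdef
  -- a.e. values in {0,1}
  have hset : MeasurableSet ({0, 1} : Set ℝ) := by measurability
  have hae : ∀ i, ∀ᵐ ω ∂μ, η i ω ∈ ({0, 1} : Set ℝ) := by
    intro i
    have hpre : μ (η i ⁻¹' ({0, 1}ᶜ : Set ℝ)) = 0 := by
      rw [← Measure.map_apply (hm i) hset.compl, hmap i]
      simp [Measure.dirac_apply', hset.compl]
    rw [MeasureTheory.ae_iff]
    convert hpre using 2
    rfl
  have haeall : ∀ᵐ ω ∂μ, ∀ i, η i ω ∈ ({0, 1} : Set ℝ) :=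
    (MeasureTheory.ae_all_iff).2 hae
  -- MemLp
  have hMem : ∀ i, MemLp (η i) 2 μ := by
    intro i
    refine MemLp.of_bound (hm i).aestronglyMeasurable 1 ?_
    filter_upwards [hae i] with ω hω
    rcases hω with h | h <;> simp_all
  -- first moment
  have hμA : ∀ i, μ (η i ⁻¹' ({1} : Set ℝ)) = ENNReal.ofReal ρ := by
    intro i
    rw [← Measure.map_apply (hm i) (measurableSet_singleton 1), hmap i]
    simp [Measure.dirac_apply']
  have hint1 : ∀ i, ∫ ω, η i ω ∂μ = ρ := by
    intro i
    have heq : η i =ᵐ[μ] (η i ⁻¹' ({1} : Set ℝ)).indicator (fun _ => (1 : ℝ)) := by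
      filter_upwards [hae i] with ω hω
      rcases hω with h | h
      · have h0 : η i ω = 0 := h
        have hnot : ω ∉ η i ⁻¹' ({1} : Set ℝ) := by simp [Set.mem_preimage, h0]
        simp [Set.indicator_of_notMem hnot, h0]
      · have h1 : η i ω = 1 := h
        have hmem : ω ∈ η i ⁻¹' ({1} : Set ℝ) := by simp [Set.mem_preimage, h1]
        simp [Set.indicator_of_mem hmem, h1]
    rw [integral_congr_ae heq,
      integral_indicator_const (1 : ℝ) ((hm i) (measurableSet_singleton 1)),
      measureReal_def, hμA i]
    simp [ENNReal.toReal_ofReal hρ0.le]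
  -- second moment
  have hint2 : ∀ i, ∫ ω, (η i ω) ^ 2 ∂μ = ρ := by
    intro i
    have heq : (fun ω => (η i ω) ^ 2) =ᵐ[μ] η i := by
      filter_upwards [hae i] with ω hω
      rcases hω with h | h <;> simp_all
    rw [integral_congr_ae heq, hint1 i]
  -- variance of each
  have hvar : ∀ i, variance (η i) μ = ρ * (1 - ρ) := by
    intro i
    rw [variance_eq_sub (hMem i)]
    have h1 : μ[(η i) ^ 2] = ρ := by
      rw [← hint2 i]; rfl
    have h2 : μ[η i] = ρ := hint1 i
    rw [h1, h2]; ring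
  -- sum
  set S : Ω → ℝ := fun ω => ∑ i, η i ω with hSdef
  have hSm : Measurable S := Finset.measurable_sum _ (fun i _ => hm i)
  have hSsum : S = ∑ i : Fin ℓ, η i := by
    funext ω; simp [hSdef, Finset.sum_apply]
  have hSMem : MemLp S 2 μ := by
    rw [hSsum]; exact memLp_finset_sum' _ (fun i _ => hMem i)
  have hSvar : variance S μ = L * (ρ * (1 - ρ)) := by
    rw [hSsum, IndepFun.variance_sum (fun i _ => hMem i)
      (fun i _ j _ hij => hind.indepFun hij)]
    simp [hvar, Finset.sum_const, nsmul_eq_mul, hLdef]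
  have hSint : ∫ ω, S ω ∂μ = L * ρ := by
    rw [hSdef, integral_finset_sum _ (fun i _ => (hMem i).integrable (by norm_num))]
    simp [hint1, Finset.sum_const, nsmul_eq_mul, hLdef]
  -- ∫ X² = ρ(1-ρ)/L where X = S/L - ρ
  have hX2int : ∫ ω, (S ω / L - ρ) ^ 2 ∂μ = ρ * (1 - ρ) / L := by
    have h1 : (∫ ω, (S ω - L * ρ) ^ 2 ∂μ) = L * (ρ * (1 - ρ)) := by
      rw [← hSvar, variance_eq_integral hSMem.aestronglyMeasurable.aemeasurable]
      refine integral_congr_ae (Filter.Eventually.of_forall fun ω => ?_)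
      simp only [Pi.pow_apply, Pi.sub_apply, hSint]
    have h2 : ∀ ω, (S ω / L - ρ) ^ 2 = (1 / L ^ 2) * (S ω - L * ρ) ^ 2 := by
      intro ω; field_simp
    simp_rw [h2]
    rw [integral_const_mul, h1]
    field_simp
  -- pointwise a.e. bound
  set v : ℝ := ρ * (1 - ρ) / L with hvdef
  have h1ρ : (0 : ℝ) < 1 - ρ := by linarith
  have hv0 : 0 < v := by
    rw [hvdef]; exact div_pos (mul_pos hρ0 h1ρ) hL0
  set b : ℝ := 2 * ρ - 1 with hbdef
  have hb1 : b ^ 2 ≤ 1 := by nlinarith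
  set f : Ω → ℝ := fun ω =>
    ((L / (L - 1)) * ((S ω / L - ρ) ^ 2 - v) + (b / (L - 1)) * (S ω / L - ρ)
      - (S ω / L - ρ) ^ 2 + v) ^ 2 with hfdef
  set g : Ω → ℝ := fun ω => (1 / (L - 1)) ^ 2 * (6 * (S ω / L - ρ) ^ 2 + 3 * v ^ 2)
    with hgdef
  have hbound : ∀ᵐ ω ∂μ, f ω ≤ g ω := by
    filter_upwards [haeall] with ω hω
    have h01 : ∀ i, 0 ≤ η i ω ∧ η i ω ≤ 1 := by
      intro i; rcases hω i with h | h <;> simp_all <;> norm_num [h]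
    have hS0 : 0 ≤ S ω := Finset.sum_nonneg fun i _ => (h01 i).1
    have hS1 : S ω ≤ L := by
      calc S ω ≤ ∑ _i : Fin ℓ, (1 : ℝ) := Finset.sum_le_sum fun i _ => (h01 i).2
      _ = L := by simp [hLdef]
    set x : ℝ := S ω / L - ρ with hxdef
    have h1 : 0 ≤ S ω / L := div_nonneg hS0 hL0.le
    have h2 : S ω / L ≤ 1 := (div_le_one hL0).2 hS1
    have hx2 : x ^ 2 ≤ 1 := by
      rw [hxdef]
      nlinarith [h1, h2, hρ0.le, hρ1.le]
    have hfeq : f ω = (1 / (L - 1)) ^ 2 * (x ^ 2 - v + b * x) ^ 2 := by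
      simp only [hfdef]
      rw [← hxdef]
      field_simp
      ring
    rw [hfeq, hgdef]
    have key : (x ^ 2 - v + b * x) ^ 2 ≤ 6 * x ^ 2 + 3 * v ^ 2 := by
      nlinarith [sq_nonneg (x ^ 2 + v), sq_nonneg (x ^ 2 - b * x), sq_nonneg (v + b * x),
        mul_nonneg (sub_nonneg.2 hx2) (sq_nonneg x),
        mul_nonneg (sub_nonneg.2 hb1) (sq_nonneg x), sq_nonneg x]
    have hpos : (0 : ℝ) ≤ (1 / (L - 1)) ^ 2 := sq_nonneg _
    exact mul_le_mul_of_nonneg_left key hpos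
  -- integrability
  have hfm : Measurable f := by
    apply Measurable.pow_const
    exact ((((measurable_const.mul ((((hSm.div_const L).sub_const ρ).pow_const 2).sub_const
      v)).add (measurable_const.mul ((hSm.div_const L).sub_const ρ))).sub
      (((hSm.div_const L).sub_const ρ).pow_const 2)).add_const v)
  have hX2mem : MemLp (fun ω => (S ω / L - ρ) ^ 2) 1 μ := by
    refine MemLp.of_bound (((hSm.div_const L).sub_const ρ).pow_const 2).aestronglyMeasurable
      1 ?_
    filter_upwards [haeall] with ω hω
    have h01 : ∀ i, 0 ≤ η i ω ∧ η i ω ≤ 1 := by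
      intro i; rcases hω i with h | h <;> simp_all <;> norm_num [h]
    have hS0 : 0 ≤ S ω := Finset.sum_nonneg fun i _ => (h01 i).1
    have hS1 : S ω ≤ L := by
      calc S ω ≤ ∑ _i : Fin ℓ, (1 : ℝ) := Finset.sum_le_sum fun i _ => (h01 i).2
      _ = L := by simp [hLdef]
    have h1 : 0 ≤ S ω / L := div_nonneg hS0 hL0.le
    have h2 : S ω / L ≤ 1 := (div_le_one hL0).2 hS1
    have : (S ω / L - ρ) ^ 2 ≤ 1 := by nlinarith
    rw [Real.norm_eq_abs, abs_of_nonneg (sq_nonneg _)]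
    exact this
  have hX2i : Integrable (fun ω => (S ω / L - ρ) ^ 2) μ :=
    memLp_one_iff_integrable.1 hX2mem
  have hgi : Integrable g μ := by
    simp only [hgdef]
    exact ((hX2i.const_mul 6).add (integrable_const _)).const_mul _
  have hfi : Integrable f μ := by
    refine hgi.mono' hfm.aestronglyMeasurable ?_
    filter_upwards [hbound] with ω hω
    rw [Real.norm_eq_abs, abs_of_nonneg (sq_nonneg _)]
    exact hω
  -- conclude
  have hle : ∫ ω, f ω ∂μ ≤ ∫ ω, g ω ∂μ := integral_mono_ae hfi hgi hbound
  have hgval : ∫ ω, g ω ∂μ = (1 / (L - 1)) ^ 2 * (6 * (ρ * (1 - ρ) / L) + 3 * v ^ 2) := by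
    simp only [hgdef]
    rw [integral_const_mul, integral_add (hX2i.const_mul 6) (integrable_const _),
      integral_const_mul, hX2int, integral_const]
    simp [hvdef]
  have hfinal : (1 / (L - 1)) ^ 2 * (6 * (ρ * (1 - ρ) / L) + 3 * v ^ 2) ≤ 36 / L ^ 3 := by
    have hp : ρ * (1 - ρ) ≤ 1 / 4 := by nlinarith
    have hp0 : 0 < ρ * (1 - ρ) := mul_pos hρ0 (by linarith)
    have e1 : (1 / (L - 1)) ^ 2 * (6 * (ρ * (1 - ρ) / L) + 3 * (ρ * (1 - ρ) / L) ^ 2)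
        = (6 * (ρ * (1 - ρ)) * L + 3 * (ρ * (1 - ρ)) ^ 2) / ((L - 1) ^ 2 * L ^ 2) := by
      field_simp
    rw [hvdef, e1, div_le_div_iff₀ (by positivity) (by positivity)]
    nlinarith [mul_le_mul_of_nonneg_right hp (by positivity : (0:ℝ) ≤ L ^ 4),
      mul_le_mul_of_nonneg_right
        (mul_le_mul hp hp hp0.le (by norm_num : (0:ℝ) ≤ 1/4)) (by positivity : (0:ℝ) ≤ L ^ 3),
      mul_nonneg (sq_nonneg (L - 2)) (sq_nonneg L),
      mul_nonneg (sub_nonneg.2 hL2) (sq_nonneg L)]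
  calc (∫ ω, (((ℓ : ℝ) / (ℓ - 1) *
                (((∑ i, η i ω) / ℓ - ρ) ^ 2 - ρ * (1 - ρ) / ℓ) +
                ((2 * ρ - 1) / (ℓ - 1)) * ((∑ i, η i ω) / ℓ - ρ))
                - ((∑ i, η i ω) / ℓ - ρ) ^ 2 + ρ * (1 - ρ) / ℓ) ^ 2 ∂μ)
      = ∫ ω, f ω ∂μ := by
        refine integral_congr_ae (Filter.Eventually.of_forall fun ω => ?_)
        simp only [hfdef, hSdef, hvdef, hbdef, hLdef]
    _ ≤ ∫ ω, g ω ∂μ := hle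
    _ = (1 / (L - 1)) ^ 2 * (6 * (ρ * (1 - ρ) / L) + 3 * v ^ 2) := hgval
    _ ≤ 36 / L ^ 3 := hfinal
end

section
/- Let 1/2 < α ≤ 1 and let f be a Schwartz function on ℝ. Then the quantity n^(2α-1) ∑_{x,y ∈ ℤ, x≠y} |y-x|^(-(2+2α)) (f(y/n) - f(x/n))² is bounded uniformly in n when α = 1, and converges to 0 as n → ∞ when α < 1. -/
set_option maxHeartbeats 1000000

open Filter Set
open scoped ENNReal NNReal

namespace Stmt19Aux

lemma mvt {f : ℝ → ℝ} (hf : Differentiable ℝ f) {a b C : ℝ} (hab : a ≤ b)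
    (hC : ∀ t ∈ Set.Icc a b, |deriv f t| ≤ C) : |f b - f a| ≤ C * (b - a) := by
  have := norm_image_sub_le_of_norm_deriv_le_segment'
    (f' := deriv f)
    (fun x _ => (hf x).hasDerivAt.hasDerivWithinAt)
    (fun x hx => hC x (Set.mem_Icc.mpr ⟨hx.1, hx.2.le⟩))
    b (Set.right_mem_Icc.2 hab)
  simpa [Real.norm_eq_abs] using this

lemma tail_sq {n : ℕ} (hn : 1 ≤ n) :
    ∑' i : ℕ, (1 : ℝ) / ((i : ℝ) + n + 1) ^ 2 ≤ 1 / (n:ℝ) := by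
  apply Real.tsum_le_of_sum_range_le (fun i => by positivity)
  intro m
  have h1 : ∀ i ∈ Finset.range m, (1:ℝ) / ((i : ℝ) + n + 1) ^ 2
      = (((n + 1 + i : ℕ) : ℝ) ^ 2)⁻¹ := by
    intro i _
    push_cast
    rw [one_div]
    ring_nf
  rw [Finset.sum_congr rfl h1]
  have h2 : ∑ i ∈ Finset.range m, (((n + 1 + i : ℕ) : ℝ) ^ 2)⁻¹
      = ∑ j ∈ Finset.Ico (n+1) (n+1+m), (((j : ℕ) : ℝ) ^ 2)⁻¹ := by
    rw [Finset.sum_Ico_eq_sum_range]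
    simp
  rw [h2]
  have h3 : Finset.Ico (n+1) (n+1+m) = Finset.Ioc n (n+m) := by
    ext j; simp [Nat.lt_succ_iff, Nat.succ_le_iff]; omega
  rw [h3]
  calc ∑ j ∈ Finset.Ioc n (n+m), (((j : ℕ) : ℝ) ^ 2)⁻¹
      ≤ (n : ℝ)⁻¹ - ((n + m : ℕ) : ℝ)⁻¹ :=
        sum_Ioc_inv_sq_le_sub (by omega) (by omega)
    _ ≤ 1 / (n:ℝ) := by
        rw [one_div]
        have : (0:ℝ) ≤ ((n + m : ℕ) : ℝ)⁻¹ := by positivity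
        linarith


lemma nat_side {h : ℕ → ℝ} {c1 c2 : ℝ} {n : ℕ} (hn : 1 ≤ n) (hc2 : 0 ≤ c2)
    (h1 : ∀ k, |h k| ≤ c1) (h2 : ∀ k : ℕ, n < k → |h k| ≤ c2 / (k : ℝ) ^ 2) :
    Summable (fun k => |h k|) ∧
      ∑' k : ℕ, |h k| ≤ (n + 1 : ℝ) * c1 + c2 / n := by
  have hmaj : Summable (fun k : ℕ => c2 * ((1:ℝ) / ((k : ℝ) + n + 1) ^ 2)) := by
    have hs : Summable (fun k : ℕ => (1:ℝ) / (k : ℝ) ^ 2) :=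
      Real.summable_one_div_nat_pow.mpr one_lt_two
    have hs2 : Summable (fun k : ℕ => (1:ℝ) / ((k + (n+1) : ℕ) : ℝ) ^ 2) :=
      (summable_nat_add_iff (f := fun k : ℕ => (1:ℝ)/(k:ℝ)^2) (n+1)).mpr hs
    have hs3 : Summable (fun k : ℕ => (1:ℝ) / ((k : ℝ) + n + 1) ^ 2) := by
      refine hs2.congr fun k => ?_
      push_cast; ring_nf
    exact hs3.mul_left c2
  have hshift_le : ∀ k : ℕ, |h (k + (n+1))| ≤ c2 * ((1:ℝ) / ((k : ℝ) + n + 1) ^ 2) := by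
    intro k
    have hk : n < k + (n+1) := by omega
    refine (h2 _ hk).trans ?_
    rw [div_eq_mul_one_div]
    push_cast
    ring_nf
    exact le_rfl
  have hs2 : Summable (fun k : ℕ => |h (k + (n+1))|) :=
    Summable.of_nonneg_of_le (fun k => abs_nonneg _) hshift_le hmaj
  have hsum : Summable (fun k : ℕ => |h k|) := (summable_nat_add_iff (f := fun k : ℕ => |h k|) (n+1)).mp hs2
  refine ⟨hsum, ?_⟩
  rw [← Summable.sum_add_tsum_nat_add (n+1) hsum]
  have hA : ∑ i ∈ Finset.range (n+1), |h i| ≤ (n + 1 : ℝ) * c1 := by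
    calc ∑ i ∈ Finset.range (n+1), |h i| ≤ ∑ _i ∈ Finset.range (n+1), c1 :=
          Finset.sum_le_sum fun i _ => h1 i
      _ = (n + 1 : ℝ) * c1 := by simp [mul_comm]
  have hB : ∑' k : ℕ, |h (k + (n+1))| ≤ c2 / n := by
    calc ∑' k : ℕ, |h (k + (n+1))|
        ≤ ∑' k : ℕ, c2 * ((1:ℝ) / ((k : ℝ) + n + 1) ^ 2) :=
          Summable.tsum_le_tsum hshift_le hs2 hmaj
      _ = c2 * ∑' k : ℕ, (1:ℝ) / ((k : ℝ) + n + 1) ^ 2 := tsum_mul_left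
      _ ≤ c2 * (1 / (n:ℝ)) := by
          exact mul_le_mul_of_nonneg_left (tail_sq hn) hc2
      _ = c2 / n := by rw [mul_one_div]
  linarith


/-- Decay constants for the derivative of a Schwartz function. -/
lemma deriv_bounds (f : SchwartzMap ℝ ℝ) :
    ∃ C0 C2 : ℝ, 0 < C0 ∧ 0 < C2 ∧ (∀ t : ℝ, |deriv f t| ≤ C0) ∧
      (∀ t : ℝ, t ^ 2 * |deriv f t| ≤ C2) := by
  obtain ⟨C0, hC0pos, hC0⟩ := (SchwartzMap.derivCLM ℝ ℝ f).decay 0 0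
  obtain ⟨C2, hC2pos, hC2⟩ := (SchwartzMap.derivCLM ℝ ℝ f).decay 2 0
  refine ⟨C0, C2, hC0pos, hC2pos, fun t => ?_, fun t => ?_⟩
  · have := hC0 t
    simpa [norm_iteratedFDeriv_zero, SchwartzMap.derivCLM_apply, Real.norm_eq_abs] using this
  · have := hC2 t
    rw [norm_iteratedFDeriv_zero] at this
    simpa [SchwartzMap.derivCLM_apply, Real.norm_eq_abs, sq_abs] using this

/-- Main one-step-difference sum bound: `∑_{x ∈ ℤ} (f((x+1)/n) - f(x/n))² ≤ K / n`. -/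
lemma g_sum (f : SchwartzMap ℝ ℝ) :
    ∃ K : ℝ, 0 ≤ K ∧ ∀ n : ℕ, 1 ≤ n →
      Summable (fun x : ℤ => (f (((x : ℝ) + 1) / n) - f ((x : ℝ) / n)) ^ 2) ∧
      ∑' x : ℤ, (f (((x : ℝ) + 1) / n) - f ((x : ℝ) / n)) ^ 2 ≤ K / n := by
  obtain ⟨C0, C2, hC0pos, hC2pos, hC0, hC2⟩ := deriv_bounds f
  refine ⟨C0 * (4 * C0 + 2 * C2), by positivity, fun n hn => ?_⟩
  have hN : (0:ℝ) < n := by exact_mod_cast hn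
  have hNne : (n:ℝ) ≠ 0 := ne_of_gt hN
  set N : ℝ := (n : ℝ) with hNdef
  set g : ℤ → ℝ := fun x => f (((x : ℝ) + 1) / N) - f ((x : ℝ) / N) with hg
  have hdiff : Differentiable ℝ (f : ℝ → ℝ) := f.differentiable
  -- uniform bound
  have b1 : ∀ x : ℤ, |g x| ≤ C0 / N := by
    intro x
    have hab : (x : ℝ) / N ≤ ((x : ℝ) + 1) / N :=
      (div_le_div_iff_of_pos_right hN).mpr (by linarith)
    have := mvt hdiff hab (fun t _ => hC0 t)
    have heq : ((x : ℝ) + 1) / N - (x : ℝ) / N = 1 / N := by field_simp; ring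
    rw [heq] at this
    calc |g x| ≤ C0 * (1 / N) := this
      _ = C0 / N := by rw [mul_one_div]
  -- decay bound, positive side
  have hderiv_decay : ∀ t : ℝ, t ≠ 0 → |deriv (f : ℝ → ℝ) t| ≤ C2 / t ^ 2 := by
    intro t ht
    have ht2 : (0:ℝ) < t ^ 2 := by positivity
    rw [le_div_iff₀ ht2, mul_comm]
    exact hC2 t
  have seg : ∀ a b m : ℝ, a ≤ b → 0 < m → (∀ t ∈ Set.Icc a b, m ≤ |t|) →
      |f b - f a| ≤ C2 / m ^ 2 * (b - a) := by
    intro a b m hab hm ht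
    apply mvt hdiff hab
    intro t htm
    have h1 : m ≤ |t| := ht t htm
    have h2 : m ^ 2 ≤ t ^ 2 := by nlinarith [sq_abs t, abs_nonneg t]
    have htne : t ≠ 0 := by
      intro h; rw [h] at h1; simp at h1; linarith
    exact (hderiv_decay t htne).trans
      (div_le_div_of_nonneg_left hC2pos.le (by positivity) h2)
  have b2pos : ∀ k : ℕ, n < k → |g (k : ℤ)| ≤ C2 * N / (k : ℝ) ^ 2 := by
    intro k hk
    have hkpos : (0:ℝ) < (k : ℝ) := by
      have : 0 < k := lt_of_le_of_lt (Nat.zero_le n) hk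
      exact_mod_cast this
    have hm : (0:ℝ) < (k : ℝ) / N := div_pos hkpos hN
    have hab : ((k:ℝ)) / N ≤ ((k:ℝ) + 1) / N := (div_le_div_iff_of_pos_right hN).mpr (by linarith)
    have hseg := seg ((k:ℝ)/N) (((k:ℝ)+1)/N) ((k:ℝ)/N) hab hm ?_
    · have heq : ((k:ℝ) + 1) / N - (k:ℝ) / N = 1 / N := by field_simp; ring
      rw [heq] at hseg
      have hgk : |g (k : ℤ)| = |f (((k:ℝ) + 1) / N) - f ((k:ℝ) / N)| := by
        rw [hg]; push_cast; ring_nf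
      rw [hgk]
      refine hseg.trans (le_of_eq ?_)
      field_simp
    · intro t htm
      have h1 : (k:ℝ)/N ≤ t := htm.1
      have : (k:ℝ)/N ≤ |t| := le_trans h1 (le_abs_self t)
      exact this
  have b2neg : ∀ k : ℕ, n < k → |g (-(k : ℤ) - 1)| ≤ C2 * N / (k : ℝ) ^ 2 := by
    intro k hk
    have hkpos : (0:ℝ) < (k : ℝ) := by
      have : 0 < k := lt_of_le_of_lt (Nat.zero_le n) hk
      exact_mod_cast this
    have hm : (0:ℝ) < (k : ℝ) / N := div_pos hkpos hN
    have hab : (-(k:ℝ) - 1) / N ≤ (-(k:ℝ)) / N := (div_le_div_iff_of_pos_right hN).mpr (by linarith)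
    have hseg := seg ((-(k:ℝ) - 1)/N) ((-(k:ℝ))/N) ((k:ℝ)/N) hab hm ?_
    · have heq : (-(k:ℝ)) / N - (-(k:ℝ) - 1) / N = 1 / N := by
        rw [div_sub_div_same]; ring_nf
      rw [heq] at hseg
      have hgk : |g (-(k : ℤ) - 1)| = |f ((-(k:ℝ)) / N) - f ((-(k:ℝ) - 1) / N)| := by
        rw [hg]; push_cast; ring_nf
      rw [hgk]
      refine hseg.trans (le_of_eq ?_)
      field_simp
    · intro t htm
      have h1 : t ≤ (-(k:ℝ))/N := htm.2
      have h2 : t ≤ 0 :=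
        h1.trans (div_nonpos_of_nonpos_of_nonneg (by linarith) hN.le)
      rw [abs_of_nonpos h2]
      rw [neg_div] at h1
      linarith
  -- apply nat_side to both sides
  have hside1 := nat_side (h := fun k : ℕ => g (k : ℤ)) hn (by positivity)
    (fun k => b1 _) (fun k hk => b2pos k hk)
  have hside2 := nat_side (h := fun k : ℕ => g (-(k : ℤ) - 1)) hn (by positivity)
    (fun k => b1 _) (fun k hk => b2neg k hk)
  -- sum of |g| over ℤ
  have habs_eq : ∀ k : ℕ, |g (-((k:ℤ) + 1))| = |g (-(k:ℤ) - 1)| := by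
    intro k; congr 1; congr 1; ring
  have hTs : Summable (fun x : ℤ => |g x|) := by
    exact Summable.of_nat_of_neg_add_one (f := fun x : ℤ => |g x|) hside1.1
      (hside2.1.congr fun k => (habs_eq k).symm)
  have hTb : ∑' x : ℤ, |g x| ≤ 4 * C0 + 2 * C2 := by
    rw [tsum_of_nat_of_neg_add_one (f := fun x : ℤ => |g x|) hside1.1
      (hside2.1.congr fun k => (habs_eq k).symm)]
    have e2 : ∑' k : ℕ, |g (-((k:ℤ) + 1))| = ∑' k : ℕ, |g (-(k:ℤ) - 1)| := by
      exact tsum_congr habs_eq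
    rw [e2]
    have hbound : ((n:ℝ) + 1) * (C0 / N) + (C2 * N) / n ≤ 2 * C0 + C2 := by
      have h1 : ((n:ℝ) + 1) * (C0 / N) ≤ 2 * C0 := by
        have hq : C0 / N * N = C0 := div_mul_cancel₀ _ hNne
        have h1n : (1:ℝ) ≤ N := by rw [hNdef]; exact_mod_cast hn
        have hqn : (0:ℝ) ≤ C0 / N := by positivity
        nlinarith [hq, mul_nonneg hqn (sub_nonneg.mpr h1n)]
      have h2 : (C2 * N) / n = C2 := by rw [hNdef]; field_simp
      linarith
    have := hside1.2
    have := hside2.2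
    linarith
  -- sum of squares
  have hsq_le : ∀ x : ℤ, g x ^ 2 ≤ (C0 / N) * |g x| := by
    intro x
    have : g x ^ 2 = |g x| * |g x| := by rw [← abs_mul, abs_of_nonneg (by nlinarith [sq_nonneg (g x)])]; ring_nf
    rw [this]
    exact mul_le_mul_of_nonneg_right (b1 x) (abs_nonneg _)
  have hSsq : Summable (fun x : ℤ => g x ^ 2) := by
    apply Summable.of_nonneg_of_le (fun x => sq_nonneg _) hsq_le (hTs.mul_left _)
  refine ⟨hSsq, ?_⟩
  calc ∑' x : ℤ, g x ^ 2 ≤ ∑' x : ℤ, (C0 / N) * |g x| :=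
        Summable.tsum_le_tsum hsq_le hSsq (hTs.mul_left _)
    _ = (C0 / N) * ∑' x : ℤ, |g x| := tsum_mul_left
    _ ≤ (C0 / N) * (4 * C0 + 2 * C2) := by
        apply mul_le_mul_of_nonneg_left hTb (by positivity)
    _ = C0 * (4 * C0 + 2 * C2) / n := by rw [hNdef]; ring


lemma real_tsum_le {ι : Type*} {F : ι → ℝ} {M : ℝ} (h0 : ∀ i, 0 ≤ F i) (hM : 0 ≤ M)
    (h : ∑' i, ENNReal.ofReal (F i) ≤ ENNReal.ofReal M) : ∑' i, F i ≤ M := by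
  by_cases hs : Summable F
  · rw [← ENNReal.ofReal_tsum_of_nonneg h0 hs] at h
    exact (ENNReal.ofReal_le_ofReal_iff hM).mp h
  · rw [tsum_eq_zero_of_not_summable hs]; exact hM

lemma cs_nat (f : SchwartzMap ℝ ℝ) (N : ℝ) (m : ℕ) :
    ∑' x : ℤ, ENNReal.ofReal ((f (((x : ℝ) + (m : ℝ)) / N) - f ((x : ℝ) / N)) ^ 2)
      ≤ (m : ℝ≥0∞) ^ 2 *
        ∑' y : ℤ, ENNReal.ofReal ((f (((y : ℝ) + 1) / N) - f ((y : ℝ) / N)) ^ 2) := by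
  set F : ℤ → ℝ≥0∞ := fun y => ENNReal.ofReal ((f (((y : ℝ) + 1) / N) - f ((y : ℝ) / N)) ^ 2)
    with hF
  have hpt : ∀ x : ℤ, (f (((x : ℝ) + (m : ℝ)) / N) - f ((x : ℝ) / N)) ^ 2
      ≤ (m : ℝ) * ∑ j ∈ Finset.range m,
        (f ((((x + j : ℤ) : ℝ) + 1) / N) - f (((x + j : ℤ) : ℝ) / N)) ^ 2 := by
    intro x
    set u : ℕ → ℝ := fun j => f (((x : ℝ) + (j : ℝ)) / N) with hu
    have htel : f (((x : ℝ) + (m : ℝ)) / N) - f ((x : ℝ) / N)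
        = ∑ j ∈ Finset.range m,
          (f ((((x + j : ℤ) : ℝ) + 1) / N) - f (((x + j : ℤ) : ℝ) / N)) := by
      have h1 : ∑ j ∈ Finset.range m, (u (j + 1) - u j) = u m - u 0 :=
        Finset.sum_range_sub u m
      have h2 : ∀ j ∈ Finset.range m, u (j + 1) - u j
          = f ((((x + j : ℤ) : ℝ) + 1) / N) - f (((x + j : ℤ) : ℝ) / N) := by
        intro j _
        have e1 : ((x : ℝ) + ((j : ℕ) + 1 : ℕ)) / N = (((x + j : ℤ) : ℝ) + 1) / N := by
          push_cast; ring_nf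
        have e2 : ((x : ℝ) + (j : ℝ)) / N = ((x + j : ℤ) : ℝ) / N := by
          push_cast; ring_nf
        rw [hu]; simp only []
        rw [e2]
        congr 1
        rw [← e1]
      rw [← Finset.sum_congr rfl h2, h1, hu]
      simp
    rw [htel]
    have := sq_sum_le_card_mul_sum_sq
      (s := Finset.range m)
      (f := fun j => f ((((x + j : ℤ) : ℝ) + 1) / N) - f (((x + j : ℤ) : ℝ) / N))
    simpa using this
  calc ∑' x : ℤ, ENNReal.ofReal ((f (((x : ℝ) + (m : ℝ)) / N) - f ((x : ℝ) / N)) ^ 2)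
      ≤ ∑' x : ℤ, ENNReal.ofReal ((m : ℝ) * ∑ j ∈ Finset.range m,
          (f ((((x + j : ℤ) : ℝ) + 1) / N) - f (((x + j : ℤ) : ℝ) / N)) ^ 2) :=
        ENNReal.tsum_le_tsum fun x => ENNReal.ofReal_le_ofReal (hpt x)
    _ = ∑' x : ℤ, (m : ℝ≥0∞) * ∑ j ∈ Finset.range m, F (x + j) := by
        refine tsum_congr fun x => ?_
        rw [ENNReal.ofReal_mul (by positivity), ENNReal.ofReal_natCast,
          ENNReal.ofReal_sum_of_nonneg (fun j _ => sq_nonneg _)]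
    _ = (m : ℝ≥0∞) * ∑' x : ℤ, ∑ j ∈ Finset.range m, F (x + j) := ENNReal.tsum_mul_left
    _ = (m : ℝ≥0∞) * ∑ j ∈ Finset.range m, ∑' x : ℤ, F (x + j) := by
        rw [Summable.tsum_finsetSum fun j _ => ENNReal.summable]
    _ = (m : ℝ≥0∞) * ∑ j ∈ Finset.range m, ∑' y : ℤ, F y := by
        congr 1
        refine Finset.sum_congr rfl fun j _ => ?_
        exact Equiv.tsum_eq (Equiv.addRight (j : ℤ)) F
    _ = (m : ℝ≥0∞) ^ 2 * ∑' y : ℤ, F y := by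
        rw [Finset.sum_const, Finset.card_range, nsmul_eq_mul, sq, mul_assoc]

lemma cs_int (f : SchwartzMap ℝ ℝ) (N : ℝ) (z : ℤ) :
    ∑' x : ℤ, ENNReal.ofReal ((f (((x + z : ℤ) : ℝ) / N) - f ((x : ℝ) / N)) ^ 2)
      ≤ (z.natAbs : ℝ≥0∞) ^ 2 *
        ∑' y : ℤ, ENNReal.ofReal ((f (((y : ℝ) + 1) / N) - f ((y : ℝ) / N)) ^ 2) := by
  set m : ℕ := z.natAbs with hm
  rcases Int.natAbs_eq z with h | h
  · have : ∀ x : ℤ, ((x + z : ℤ) : ℝ) = (x : ℝ) + (m : ℝ) := by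
      intro x; rw [h]; push_cast; rw [hm, Nat.cast_natAbs]; norm_num
    calc ∑' x : ℤ, ENNReal.ofReal ((f (((x + z : ℤ) : ℝ) / N) - f ((x : ℝ) / N)) ^ 2)
        = ∑' x : ℤ, ENNReal.ofReal ((f (((x : ℝ) + (m : ℝ)) / N) - f ((x : ℝ) / N)) ^ 2) :=
          tsum_congr fun x => by rw [this x]
      _ ≤ _ := cs_nat f N m
  · have hre : ∑' x : ℤ, ENNReal.ofReal ((f (((x + z : ℤ) : ℝ) / N) - f ((x : ℝ) / N)) ^ 2)
        = ∑' y : ℤ, ENNReal.ofReal ((f (((y : ℝ) + (m : ℝ)) / N) - f ((y : ℝ) / N)) ^ 2) := by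
      rw [← Equiv.tsum_eq (Equiv.addRight (-z))
        (fun x : ℤ => ENNReal.ofReal ((f (((x + z : ℤ) : ℝ) / N) - f ((x : ℝ) / N)) ^ 2))]
      refine tsum_congr fun y => ?_
      have e1 : ((y + -z + z : ℤ) : ℝ) = (y : ℝ) := by push_cast; ring
      have e2 : ((y + -z : ℤ) : ℝ) = (y : ℝ) + (m : ℝ) := by
        rw [h]; push_cast; rw [hm, Nat.cast_natAbs]; norm_num
      simp only [Equiv.coe_addRight]
      rw [e1, e2]
      congr 1
      ring
    rw [hre]
    exact cs_nat f N m


end Stmt19Aux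


open Stmt19Aux

theorem stmt_19 (α : ℝ) (hα1 : 1 / 2 < α) (hα2 : α ≤ 1)
    (f : SchwartzMap ℝ ℝ)
    (S : ℕ → ℝ)
    (hS : ∀ n : ℕ, S n = (n : ℝ) ^ (2 * α - 1) *
      ∑' p : ℤ × ℤ, if p.1 = p.2 then 0 else
        (f ((p.2 : ℝ) / n) - f ((p.1 : ℝ) / n)) ^ 2 / |((p.2 : ℝ) - p.1)| ^ (2 + 2 * α)) :
    (α = 1 → ∃ C : ℝ, ∀ n : ℕ, 1 ≤ n → S n ≤ C) ∧
    (α < 1 → Tendsto S atTop (nhds 0)) := by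
  obtain ⟨K, hK0, hKprop⟩ := g_sum f
  have hα' : (1:ℝ) < 2 * α := by linarith
  have hZsum : Summable (fun z : ℤ => |(z:ℝ)| ^ (-(2*α))) := Real.summable_abs_int_rpow hα'
  set Z : ℝ := ∑' z : ℤ, |(z:ℝ)| ^ (-(2*α)) with hZdef
  have hZ0 : 0 ≤ Z := tsum_nonneg fun z => Real.rpow_nonneg (abs_nonneg _) _
  -- nonnegativity of terms
  have hterm0 : ∀ (n : ℕ) (p : ℤ × ℤ), 0 ≤ (if p.1 = p.2 then (0:ℝ) else
      (f ((p.2 : ℝ) / n) - f ((p.1 : ℝ) / n)) ^ 2 / |((p.2 : ℝ) - p.1)| ^ (2 + 2 * α)) := by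
    intro n p
    split
    · exact le_rfl
    · positivity
  have hS0 : ∀ n : ℕ, 0 ≤ S n := by
    intro n
    rw [hS n]
    exact mul_nonneg (Real.rpow_nonneg (Nat.cast_nonneg n) _)
      (tsum_nonneg (hterm0 n))
  -- main bound
  have key : ∀ n : ℕ, 1 ≤ n → S n ≤ (K * Z) * (n:ℝ) ^ (2*α - 2) := by
    intro n hn
    have hN : (0:ℝ) < (n:ℝ) := by exact_mod_cast hn
    obtain ⟨hsumg, hgle⟩ := hKprop n hn
    set N : ℝ := (n : ℝ) with hNdef
    set Gs : ℝ≥0∞ := ∑' y : ℤ, ENNReal.ofReal ((f (((y:ℝ)+1)/N) - f ((y:ℝ)/N))^2) with hGsdef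
    have hGs : Gs ≤ ENNReal.ofReal (K / N) := by
      rw [hGsdef, ← ENNReal.ofReal_tsum_of_nonneg (fun x => sq_nonneg _) hsumg]
      exact ENNReal.ofReal_le_ofReal hgle
    set term : ℤ × ℤ → ℝ := fun p => if p.1 = p.2 then 0 else
      (f ((p.2 : ℝ) / n) - f ((p.1 : ℝ) / n)) ^ 2 / |((p.2 : ℝ) - p.1)| ^ (2 + 2 * α)
      with hterm
    have hE : ∑' p : ℤ × ℤ, ENNReal.ofReal (term p) ≤ ENNReal.ofReal (K / N * Z) := by
      set e : ℤ × ℤ ≃ ℤ × ℤ :=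
        { toFun := fun q => (q.2, q.2 + q.1)
          invFun := fun p => (p.2 - p.1, p.1)
          left_inv := by rintro ⟨z, x⟩; simp
          right_inv := by rintro ⟨a, b⟩; simp } with he
      rw [← Equiv.tsum_eq e (fun p => ENNReal.ofReal (term p))]
      rw [ENNReal.tsum_prod']
      have inner : ∀ z : ℤ, (∑' x : ℤ, ENNReal.ofReal (term (e (z, x))))
          ≤ ENNReal.ofReal (K/N * |(z:ℝ)| ^ (-(2*α))) := by
        intro z
        by_cases hz : z = 0
        · subst hz
          have : ∀ x : ℤ, term (e (0, x)) = 0 := by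
            intro x
            simp [he, hterm]
          simp only [this, ENNReal.ofReal_zero, tsum_zero]
          exact zero_le
        · have habs : (0:ℝ) < |(z:ℝ)| := abs_pos.mpr (Int.cast_ne_zero.mpr hz)
          have hc : (0:ℝ) < |(z:ℝ)| ^ (2+2*α) := Real.rpow_pos_of_pos habs _
          have hterm_eq : ∀ x : ℤ, term (e (z, x))
              = (f (((x + z : ℤ) : ℝ) / N) - f ((x : ℝ) / N)) ^ 2 / |(z:ℝ)| ^ (2+2*α) := by
            intro x
            have hzz : ((x + z : ℤ) : ℝ) - (x : ℝ) = (z : ℝ) := by push_cast; ring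
            simp only [he, hterm, Equiv.coe_fn_mk]
            rw [if_neg (by simpa using hz)]
            rw [hzz]
          calc (∑' x : ℤ, ENNReal.ofReal (term (e (z, x))))
              = ∑' x : ℤ, ENNReal.ofReal
                  ((f (((x + z : ℤ) : ℝ) / N) - f ((x : ℝ) / N)) ^ 2)
                  / ENNReal.ofReal (|(z:ℝ)| ^ (2+2*α)) := by
                refine tsum_congr fun x => ?_
                rw [hterm_eq x, ENNReal.ofReal_div_of_pos hc]
            _ = (∑' x : ℤ, ENNReal.ofReal
                  ((f (((x + z : ℤ) : ℝ) / N) - f ((x : ℝ) / N)) ^ 2))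
                  / ENNReal.ofReal (|(z:ℝ)| ^ (2+2*α)) := by
                simp_rw [div_eq_mul_inv]
                exact ENNReal.tsum_mul_right
            _ ≤ ((z.natAbs : ℝ≥0∞) ^ 2 * Gs) / ENNReal.ofReal (|(z:ℝ)| ^ (2+2*α)) :=
                ENNReal.div_le_div_right (cs_int f N z) _
            _ ≤ ((z.natAbs : ℝ≥0∞) ^ 2 * ENNReal.ofReal (K/N))
                  / ENNReal.ofReal (|(z:ℝ)| ^ (2+2*α)) :=
                ENNReal.div_le_div_right (mul_le_mul_right hGs _) _
            _ = ENNReal.ofReal ((z:ℝ)^2 * (K/N)) / ENNReal.ofReal (|(z:ℝ)| ^ (2+2*α)) := by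
                congr 1
                rw [ENNReal.ofReal_mul (by positivity)]
                congr 1
                rw [← ENNReal.ofReal_natCast (z.natAbs), ← ENNReal.ofReal_pow (by positivity)]
                congr 1
                rw [Nat.cast_natAbs]
                push_cast
                rw [sq_abs]
            _ = ENNReal.ofReal ((z:ℝ)^2 * (K/N) / |(z:ℝ)| ^ (2+2*α)) :=
                (ENNReal.ofReal_div_of_pos hc).symm
            _ = ENNReal.ofReal (K/N * |(z:ℝ)| ^ (-(2*α))) := by
                congr 1
                have h1 : |(z:ℝ)| ^ (2+2*α) = (z:ℝ)^2 * |(z:ℝ)| ^ (2*α) := by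
                  rw [Real.rpow_add habs]
                  congr 1
                  rw [show ((2:ℝ)) = ((2:ℕ):ℝ) by norm_num, Real.rpow_natCast, sq_abs]
                have hz2 : ((z:ℝ))^2 ≠ 0 := by positivity
                have hza : |(z:ℝ)| ^ (2*α) ≠ 0 := ne_of_gt (Real.rpow_pos_of_pos habs _)
                rw [h1, Real.rpow_neg (abs_nonneg _)]
                field_simp
      calc (∑' (z : ℤ) (x : ℤ), ENNReal.ofReal (term (e (z, x))))
          ≤ ∑' z : ℤ, ENNReal.ofReal (K/N * |(z:ℝ)| ^ (-(2*α))) :=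
            ENNReal.tsum_le_tsum inner
        _ = ENNReal.ofReal (K/N * Z) := by
            have h0 : ∀ z : ℤ, ENNReal.ofReal (K/N * |(z:ℝ)| ^ (-(2*α)))
                = ENNReal.ofReal (K/N) * ENNReal.ofReal (|(z:ℝ)| ^ (-(2*α))) := by
              intro z
              rw [ENNReal.ofReal_mul (by positivity)]
            simp_rw [h0]
            rw [ENNReal.tsum_mul_left,
              ← ENNReal.ofReal_tsum_of_nonneg (fun z => Real.rpow_nonneg (abs_nonneg _) _) hZsum,
              ← ENNReal.ofReal_mul (by positivity), hZdef]
    have htsum_le : ∑' p : ℤ × ℤ, term p ≤ K/N * Z :=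
      real_tsum_le (hterm0 n) (by positivity) hE
    rw [hS n]
    calc (n:ℝ) ^ (2*α - 1) * ∑' p : ℤ × ℤ, term p
        ≤ (n:ℝ) ^ (2*α - 1) * (K/N * Z) :=
          mul_le_mul_of_nonneg_left htsum_le (Real.rpow_nonneg (Nat.cast_nonneg n) _)
      _ = (K * Z) * (n:ℝ) ^ (2*α - 2) := by
          have hstep : (n:ℝ) ^ (2*α - 1) = (n:ℝ) ^ (2*α - 2) * N := by
            rw [show (2*α - 1 : ℝ) = (2*α - 2) + 1 by ring, Real.rpow_add hN, Real.rpow_one]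
          rw [hstep]
          have hNne : N ≠ 0 := ne_of_gt hN
          field_simp
  constructor
  · intro hα1'
    refine ⟨K * Z, fun n hn => ?_⟩
    have := key n hn
    rw [hα1'] at this
    norm_num at this
    exact this
  · intro hαlt
    have h2 : Tendsto (fun x : ℝ => x ^ (2*α - 2)) atTop (nhds 0) := by
      have hexp : 2*α - 2 = -(2 - 2*α) := by ring
      rw [hexp]
      exact tendsto_rpow_neg_atTop (by linarith)
    have h3 : Tendsto (fun n : ℕ => (K * Z) * (n:ℝ) ^ (2*α - 2)) atTop (nhds 0) := by
      have h4 := (h2.comp tendsto_natCast_atTop_atTop).const_mul (K * Z)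
      simpa using h4
    exact squeeze_zero' (Eventually.of_forall hS0) (eventually_atTop.2 ⟨1, key⟩) h3
end
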